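/- Let q be a prime power, let b be a positive integer, and let H_Y be the Hilbert function of the set Y of F_q-rational points of P(1,1,b). Then for every natural number d, H_Y(d) = q² + q + 1 if and only if d = d₀b for some natural number d₀ with d₀ ≥ q + ⌊(q−1)/b⌋. In other words, the regularity set reg(Y) = {d ∈ ℕ : H_Y(d) = q² + q + 1} equals (q + ⌊(q−1)/b⌋)b + ℕb. -/

import Mathlib

set_option linter.unusedSectionVars false
set_option maxHeartbeats 1000000


open MvPolynomial

noncomputable section

variable (F : Type) [Field F] [Fintype F]

/-- The submodule of polynomials vanishing at every nonzero point of `F³`. -/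
def vanishing : Submodule F (MvPolynomial (Fin 3) F) where
  carrier := {f | ∀ y : Fin 3 → F, y ≠ 0 → eval y f = 0}
  add_mem' := fun hf hg y hy => by simp [hf y hy, hg y hy]
  zero_mem' := fun y hy => by simp
  smul_mem' := fun c f hf y hy => by simp [MvPolynomial.smul_eval, hf y hy]

/-- `S_d`: the degree-`d` weighted-homogeneous piece (weights `1, 1, b`). -/
def Sd (b d : ℕ) : Submodule F (MvPolynomial (Fin 3) F) :=
  weightedHomogeneousSubmodule F ![1, 1, b] d

/-- `I_d`: the degree-`d` piece of the vanishing ideal of `ℙ(1,1,b)(F_q)`. -/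
def Id' (b d : ℕ) : Submodule F (MvPolynomial (Fin 3) F) := Sd F b d ⊓ vanishing F

/-- The Hilbert function `H_Y(d) = dim S_d − dim I_d` of `Y = ℙ(1,1,b)(F_q)`. -/
def HY (b d : ℕ) : ℕ :=
  Module.finrank F ↥(Sd F b d) - Module.finrank F ↥(Id' F b d)

namespace P11bAux
open Finset

lemma weight3 (b : ℕ) (m : Fin 3 →₀ ℕ) :
    (Finsupp.weight ![1, 1, b] m : ℕ) = m 0 + m 1 + m 2 * b := by
  rw [Finsupp.weight_apply, Finsupp.sum_fintype]
  · simp [Fin.sum_univ_three]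
  · intro i; simp

lemma mem_Sd_iff {b d : ℕ} (f : MvPolynomial (Fin 3) F) :
    f ∈ Sd F b d ↔ ∀ m : Fin 3 →₀ ℕ, coeff m f ≠ 0 → m 0 + m 1 + m 2 * b = d := by
  rw [Sd, mem_weightedHomogeneousSubmodule]
  constructor
  · intro h m hm; rw [← weight3]; exact h hm
  · intro h m hm; rw [weight3]; exact h m hm

abbrev RT (F : Type) : Type := (F × F) ⊕ (F ⊕ Unit)

def pt : RT F → Fin 3 → F
  | Sum.inl ac => ![1, ac.1, ac.2]
  | Sum.inr (Sum.inl c) => ![0, 1, c]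
  | Sum.inr (Sum.inr _) => ![0, 0, 1]

lemma pt_ne_zero (r : RT F) : pt F r ≠ 0 := by
  rcases r with ⟨a, c⟩ | c | u
  · intro h; simpa [pt] using congr_fun h 0
  · intro h; simpa [pt] using congr_fun h 1
  · intro h; simpa [pt] using congr_fun h 2

def Emap (b d : ℕ) : (Sd F b d) →ₗ[F] (RT F → F) where
  toFun f := fun r => eval (pt F r) (f : MvPolynomial (Fin 3) F)
  map_add' f g := by funext r; simp
  map_smul' a f := by funext r; simp [MvPolynomial.smul_eval]

lemma card_RT : Fintype.card (RT F) = Fintype.card F ^ 2 + Fintype.card F + 1 := by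
  simp [Fintype.card_sum, Fintype.card_prod]; ring


lemma Sd_le_span (b d : ℕ) :
    Sd F b d ≤ Submodule.span F
      ((fun m => (monomial m (1 : F) : MvPolynomial (Fin 3) F)) ''
        {m : Fin 3 →₀ ℕ | m 0 + m 1 + m 2 * b = d}) := by
  intro f hf
  rw [show f = ∑ m ∈ f.support, monomial m (coeff m f) from (support_sum_monomial_coeff f).symm]
  apply Submodule.sum_mem
  intro m hm
  rw [show (monomial m (coeff m f) : MvPolynomial (Fin 3) F)
      = coeff m f • monomial m 1 by rw [smul_monomial, smul_eq_mul, mul_one]]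
  exact Submodule.smul_mem _ _ (Submodule.subset_span
    ⟨m, (mem_Sd_iff F f).mp hf m (mem_support_iff.mp hm), rfl⟩)

lemma fd_Sd {b : ℕ} (hb : 0 < b) (d : ℕ) : FiniteDimensional F (Sd F b d) := by
  apply Submodule.finiteDimensional_of_le
    (S₂ := MvPolynomial.restrictTotalDegree (Fin 3) F d)
  intro f hf
  rw [MvPolynomial.mem_restrictTotalDegree]
  apply Finset.sup_le
  intro m hm
  have h := (mem_Sd_iff F f).mp hf m (mem_support_iff.mp hm)
  have : (m.sum fun _ e => e) = m 0 + m 1 + m 2 := by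
    rw [Finsupp.sum_fintype]
    · exact Fin.sum_univ_three _
    · intro i; rfl
  rw [this]
  nlinarith [m.2 2]

lemma eval_scale {b d : ℕ} {f : MvPolynomial (Fin 3) F} (hf : f ∈ Sd F b d)
    (l : F) (y : Fin 3 → F) :
    eval (fun i => l ^ (![1, 1, b] : Fin 3 → ℕ) i * y i) f = l ^ d * eval y f := by
  rw [eval_eq', eval_eq', Finset.mul_sum]
  apply Finset.sum_congr rfl
  intro m hm
  have h := (mem_Sd_iff F f).mp hf m (mem_support_iff.mp hm)
  rw [mul_left_comm]
  congr 1
  have : ∀ i, (l ^ (![1, 1, b] : Fin 3 → ℕ) i * y i) ^ m i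
      = l ^ ((![1, 1, b] : Fin 3 → ℕ) i * m i) * y i ^ m i := by
    intro i; rw [mul_pow, pow_mul]
  simp only [this]
  rw [Finset.prod_mul_distrib, Finset.prod_pow_eq_pow_sum]
  congr 2
  rw [Fin.sum_univ_three]
  simp only [Matrix.cons_val_zero, Matrix.cons_val_one, Matrix.head_cons,
    Matrix.cons_val_two, Matrix.tail_cons]
  rw [one_mul, one_mul, mul_comm b (m 2)]
  omega


lemma eval_pt_zero_of_reps {b d : ℕ} (hb : 0 < b) {f : MvPolynomial (Fin 3) F}
    (hf : f ∈ Sd F b d) (h : ∀ r : RT F, eval (pt F r) f = 0) :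
    ∀ y : Fin 3 → F, y ≠ 0 → eval y f = 0 := by
  intro y hy
  by_cases h0 : y 0 ≠ 0
  · have key := eval_scale F hf (y 0) (pt F (Sum.inl (y 1 * (y 0)⁻¹, y 2 * ((y 0) ^ b)⁻¹)))
    rw [h (Sum.inl _), mul_zero] at key
    have hpt : (fun i => (y 0) ^ (![1, 1, b] : Fin 3 → ℕ) i
        * pt F (Sum.inl (y 1 * (y 0)⁻¹, y 2 * ((y 0) ^ b)⁻¹)) i) = y := by
      funext i
      have hb0 : (y 0) ^ b ≠ 0 := pow_ne_zero _ h0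
      fin_cases i <;> simp [pt] <;> field_simp
    rw [hpt] at key
    exact key
  · push_neg at h0
    by_cases h1 : y 1 ≠ 0
    · have key := eval_scale F hf (y 1) (pt F (Sum.inr (Sum.inl (y 2 * ((y 1) ^ b)⁻¹))))
      rw [h (Sum.inr (Sum.inl _)), mul_zero] at key
      have hpt : (fun i => (y 1) ^ (![1, 1, b] : Fin 3 → ℕ) i
          * pt F (Sum.inr (Sum.inl (y 2 * ((y 1) ^ b)⁻¹))) i) = y := by
        funext i
        have hb1 : (y 1) ^ b ≠ 0 := pow_ne_zero _ h1
        fin_cases i <;> simp [pt, h0] <;> field_simp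
      rw [hpt] at key
      exact key
    · push_neg at h1
      have key : eval y f = (y 2) ^ (d / b) * eval (pt F (Sum.inr (Sum.inr ()))) f := by
        rw [eval_eq', eval_eq', Finset.mul_sum]
        apply Finset.sum_congr rfl
        intro m hm
        have hmd := (mem_Sd_iff F f).mp hf m (mem_support_iff.mp hm)
        rw [Fin.prod_univ_three, Fin.prod_univ_three,
          show pt F (Sum.inr (Sum.inr ())) = ![0, 0, 1] from rfl]
        rcases Nat.eq_zero_or_pos (m 0) with hm0 | hm0
        · rcases Nat.eq_zero_or_pos (m 1) with hm1 | hm1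
          · have hm2 : m 2 = d / b := by
              have : d / b = m 2 := Nat.div_eq_of_eq_mul_left hb (by omega)
              omega
            rw [hm0, hm1, hm2, h0, h1]
            simp
            ring
          · rw [h1, zero_pow (by omega : m 1 ≠ 0)]
            simp [zero_pow (by omega : m 1 ≠ 0)]
        · rw [h0, zero_pow (by omega : m 0 ≠ 0)]
          simp [zero_pow (by omega : m 0 ≠ 0)]
      rw [key, h (Sum.inr (Sum.inr ())), mul_zero]

lemma ker_Emap {b d : ℕ} (hb : 0 < b) :
    LinearMap.ker (Emap F b d)
      = Submodule.comap (Sd F b d).subtype (vanishing F) := by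
  ext f
  simp only [LinearMap.mem_ker, Submodule.mem_comap, Submodule.coe_subtype]
  constructor
  · intro hker
    intro y hy
    exact eval_pt_zero_of_reps F hb f.2 (fun r => congr_fun hker r) y hy
  · intro hvan
    funext r
    exact hvan (pt F r) (pt_ne_zero F r)

lemma HY_eq_finrank_range {b d : ℕ} (hb : 0 < b) :
    HY F b d = Module.finrank F (LinearMap.range (Emap F b d)) := by
  haveI := fd_Sd F hb d
  have hrn := LinearMap.finrank_range_add_finrank_ker (Emap F b d)
  have hker : Module.finrank F (LinearMap.ker (Emap F b d))
      = Module.finrank F (Id' F b d) := by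
    rw [ker_Emap F hb]
    have : Submodule.comap (Sd F b d).subtype (vanishing F)
        = Submodule.comap (Sd F b d).subtype (Id' F b d) := by
      rw [Id', Submodule.comap_inf, Submodule.comap_subtype_self, top_inf_eq]
    rw [this]
    exact (Submodule.comapSubtypeEquivOfLe inf_le_left).finrank_eq
  rw [HY, ← hker, ← hrn]
  omega


lemma HY_eq_top_iff {b d : ℕ} (hb : 0 < b) :
    HY F b d = Fintype.card F ^ 2 + Fintype.card F + 1 ↔
      LinearMap.range (Emap F b d) = ⊤ := by
  haveI := fd_Sd F hb d
  rw [HY_eq_finrank_range F hb]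
  constructor
  · intro h
    apply Submodule.eq_top_of_finrank_eq
    rw [h, Module.finrank_fintype_fun_eq_card, card_RT]
  · intro h
    rw [h, finrank_top, Module.finrank_fintype_fun_eq_card, card_RT]

lemma IWH_sub {w : Fin 3 → ℕ} {n : ℕ} {p q : MvPolynomial (Fin 3) F}
    (hp : IsWeightedHomogeneous w p n) (hq : IsWeightedHomogeneous w q n) :
    IsWeightedHomogeneous w (p - q) n := by
  rw [← mem_weightedHomogeneousSubmodule] at hp hq ⊢
  exact Submodule.sub_mem _ hp hq

lemma IWH_pow {w : Fin 3 → ℕ} {p : MvPolynomial (Fin 3) F} {k : ℕ}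
    (h : IsWeightedHomogeneous w p k) (t : ℕ) :
    IsWeightedHomogeneous w (p ^ t) (t * k) := by
  induction t with
  | zero => simpa using isWeightedHomogeneous_one F w
  | succ t ih =>
      rw [pow_succ, Nat.succ_mul]
      exact ih.mul h

lemma IWH_prod_const {α : Type} [DecidableEq α] (s : Finset α)
    (φ : α → MvPolynomial (Fin 3) F) {w : Fin 3 → ℕ} {k : ℕ}
    (h : ∀ a ∈ s, IsWeightedHomogeneous w (φ a) k) :
    IsWeightedHomogeneous w (∏ a ∈ s, φ a) (s.card * k) := by
  have := IsWeightedHomogeneous.prod s φ (fun _ => k) h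
  rwa [Finset.sum_const, smul_eq_mul] at this


lemma single_inl_mem [DecidableEq F] [DecidableEq (RT F)] {b d s : ℕ} (hs : s ≠ 0)
    (hd : d = s + ((Fintype.card F - 1) + (Fintype.card F - 1) * b)) (a₀ c₀ : F) :
    Pi.single (Sum.inl (a₀, c₀) : RT F) (1 : F) ∈ LinearMap.range (Emap F b d) := by
  set n := Fintype.card F - 1 with hn
  set G : MvPolynomial (Fin 3) F :=
    X 0 ^ s * ((Finset.univ.erase a₀).prod fun a => X 1 - C a * X 0)
      * ((Finset.univ.erase c₀).prod fun c => X 2 - C c * X 0 ^ b) with hG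
  have hcard : ∀ x : F, (Finset.univ.erase x).card = n := by
    intro x; rw [Finset.card_erase_of_mem (Finset.mem_univ x), Finset.card_univ]
  have hGmem : G ∈ Sd F b d := by
    rw [Sd, mem_weightedHomogeneousSubmodule, hd, ← add_assoc]
    have h1 : IsWeightedHomogeneous ![1,1,b] (X 0 ^ s : MvPolynomial (Fin 3) F) s := by
      have := IWH_pow (F := F) (isWeightedHomogeneous_X F ![1,1,b] 0) s
      simpa using this
    have h2 : IsWeightedHomogeneous ![1,1,b]
        (((Finset.univ.erase a₀).prod fun a => X 1 - C a * X 0) : MvPolynomial (Fin 3) F) n := by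
      have h := IWH_prod_const (F := F) (Finset.univ.erase a₀)
        (fun a => X 1 - C a * X 0) (w := ![1,1,b]) (k := 1) ?_
      · rwa [hcard, mul_one] at h
      · intro a _
        apply IWH_sub
        · simpa using isWeightedHomogeneous_X F ![1,1,b] 1
        · have := (isWeightedHomogeneous_C (σ := Fin 3) ![1,1,b] a).mul
            (isWeightedHomogeneous_X F ![1,1,b] 0)
          simpa using this
    have h3 : IsWeightedHomogeneous ![1,1,b]
        (((Finset.univ.erase c₀).prod fun c => X 2 - C c * X 0 ^ b) : MvPolynomial (Fin 3) F)
        (n * b) := by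
      have h := IWH_prod_const (F := F) (Finset.univ.erase c₀)
        (fun c => X 2 - C c * X 0 ^ b) (w := ![1,1,b]) (k := b) ?_
      · rwa [hcard] at h
      · intro c _
        apply IWH_sub
        · simpa using isWeightedHomogeneous_X F ![1,1,b] 2
        · have := (isWeightedHomogeneous_C (σ := Fin 3) ![1,1,b] c).mul
            (IWH_pow (F := F) (isWeightedHomogeneous_X F ![1,1,b] 0) b)
          simpa using this
    exact (h1.mul h2).mul h3
  have hval : ∀ y : Fin 3 → F, eval y G =
      y 0 ^ s * ((Finset.univ.erase a₀).prod fun a => y 1 - a * y 0)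
        * ((Finset.univ.erase c₀).prod fun c => y 2 - c * y 0 ^ b) := by
    intro y
    simp [hG]
  set v := (((Finset.univ.erase a₀).prod fun a => a₀ - a)
      * ((Finset.univ.erase c₀).prod fun c => c₀ - c)) with hv
  have hvne : v ≠ 0 := by
    apply mul_ne_zero <;>
    · rw [Finset.prod_ne_zero_iff]
      intro x hx
      exact sub_ne_zero_of_ne (Ne.symm (Finset.mem_erase.mp hx).1)
  refine ⟨v⁻¹ • ⟨G, hGmem⟩, ?_⟩
  funext r
  have hEr : Emap F b d (v⁻¹ • (⟨G, hGmem⟩ : Sd F b d)) r = v⁻¹ * eval (pt F r) G := by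
    simp [Emap, MvPolynomial.smul_eval]
  rw [hEr]
  rcases r with ⟨a, c⟩ | c | u
  · have hev : eval (pt F (Sum.inl (a, c))) G
        = ((Finset.univ.erase a₀).prod fun a' => a - a')
          * ((Finset.univ.erase c₀).prod fun c' => c - c') := by
      rw [hval]
      simp [pt]
    by_cases ha : a = a₀
    · by_cases hc : c = c₀
      · subst ha; subst hc
        rw [hev, Pi.single_eq_same, ← hv]
        exact inv_mul_cancel₀ hvne
      · have h0 : ((Finset.univ.erase c₀).prod fun c' => c - c') = 0 :=
          Finset.prod_eq_zero (Finset.mem_erase.mpr ⟨hc, Finset.mem_univ c⟩) (sub_self c)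
        rw [hev, h0, mul_zero, mul_zero]
        simp [Pi.single_apply, hc]
    · have h0 : ((Finset.univ.erase a₀).prod fun a' => a - a') = 0 :=
        Finset.prod_eq_zero (Finset.mem_erase.mpr ⟨ha, Finset.mem_univ a⟩) (sub_self a)
      rw [hev, h0, zero_mul, mul_zero]
      simp [Pi.single_apply, ha]
  · rw [hval, show pt F (Sum.inr (Sum.inl c)) 0 = 0 from rfl, zero_pow hs,
      zero_mul, zero_mul, mul_zero]
    simp [Pi.single_apply]
  · rw [hval, show pt F (Sum.inr (Sum.inr u)) 0 = 0 from rfl, zero_pow hs,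
      zero_mul, zero_mul, mul_zero]
    simp [Pi.single_apply]


lemma single_mid_mem [DecidableEq F] [DecidableEq (RT F)] {b d s : ℕ} (hs : s ≠ 0)
    (hd : d = s + ((Fintype.card F - 1) + (Fintype.card F - 1) * b)) (c₀ : F) :
    Pi.single (Sum.inr (Sum.inl c₀) : RT F) (1 : F) ∈ LinearMap.range (Emap F b d) := by
  set n := Fintype.card F - 1 with hn
  have hn1 : n ≠ 0 := by
    have : 2 ≤ Fintype.card F := Fintype.one_lt_card
    omega
  set G : MvPolynomial (Fin 3) F :=
    X 1 ^ s * (X 0 ^ n - X 1 ^ n)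
      * ((Finset.univ.erase c₀).prod fun c => X 2 - C c * X 1 ^ b) with hG
  have hcard : ∀ x : F, (Finset.univ.erase x).card = n := by
    intro x; rw [Finset.card_erase_of_mem (Finset.mem_univ x), Finset.card_univ]
  have hGmem : G ∈ Sd F b d := by
    rw [Sd, mem_weightedHomogeneousSubmodule, hd, ← add_assoc]
    have h1 : IsWeightedHomogeneous ![1,1,b] (X 1 ^ s : MvPolynomial (Fin 3) F) s := by
      have := IWH_pow (F := F) (isWeightedHomogeneous_X F ![1,1,b] 1) s
      simpa using this
    have h2 : IsWeightedHomogeneous ![1,1,b]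
        ((X 0 ^ n - X 1 ^ n) : MvPolynomial (Fin 3) F) n := by
      apply IWH_sub
      · have := IWH_pow (F := F) (isWeightedHomogeneous_X F ![1,1,b] 0) n
        simpa using this
      · have := IWH_pow (F := F) (isWeightedHomogeneous_X F ![1,1,b] 1) n
        simpa using this
    have h3 : IsWeightedHomogeneous ![1,1,b]
        (((Finset.univ.erase c₀).prod fun c => X 2 - C c * X 1 ^ b) : MvPolynomial (Fin 3) F)
        (n * b) := by
      have h := IWH_prod_const (F := F) (Finset.univ.erase c₀)
        (fun c => X 2 - C c * X 1 ^ b) (w := ![1,1,b]) (k := b) ?_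
      · rwa [hcard] at h
      · intro c _
        apply IWH_sub
        · simpa using isWeightedHomogeneous_X F ![1,1,b] 2
        · have := (isWeightedHomogeneous_C (σ := Fin 3) ![1,1,b] c).mul
            (IWH_pow (F := F) (isWeightedHomogeneous_X F ![1,1,b] 1) b)
          simpa using this
    exact (h1.mul h2).mul h3
  have hval : ∀ y : Fin 3 → F, eval y G =
      y 1 ^ s * (y 0 ^ n - y 1 ^ n)
        * ((Finset.univ.erase c₀).prod fun c => y 2 - c * y 1 ^ b) := by
    intro y
    simp [hG]
  set v := (-1 : F) * ((Finset.univ.erase c₀).prod fun c => c₀ - c) with hv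
  have hvne : v ≠ 0 := by
    apply mul_ne_zero (by norm_num)
    rw [Finset.prod_ne_zero_iff]
    intro x hx
    exact sub_ne_zero_of_ne (Ne.symm (Finset.mem_erase.mp hx).1)
  refine ⟨v⁻¹ • ⟨G, hGmem⟩, ?_⟩
  funext r
  have hEr : Emap F b d (v⁻¹ • (⟨G, hGmem⟩ : Sd F b d)) r = v⁻¹ * eval (pt F r) G := by
    simp [Emap, MvPolynomial.smul_eval]
  rw [hEr]
  rcases r with ⟨a, c⟩ | c | u
  · have hev : eval (pt F (Sum.inl (a, c))) G
        = a ^ s * (1 - a ^ n) * ((Finset.univ.erase c₀).prod fun c' => c - c' * a ^ b) := by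
      rw [hval]
      simp [pt]
    rw [hev]
    by_cases ha : a = 0
    · rw [ha, zero_pow hs, zero_mul, zero_mul]
      simp [Pi.single_apply]
    · rw [hn, FiniteField.pow_card_sub_one_eq_one a ha, sub_self, mul_zero, zero_mul]
      simp [Pi.single_apply]
  · have hev : eval (pt F (Sum.inr (Sum.inl c))) G
        = (0 - 1) * ((Finset.univ.erase c₀).prod fun c' => c - c') := by
      rw [hval]
      simp [pt, zero_pow hn1, zero_pow hs]
    rw [hev]
    by_cases hc : c = c₀
    · subst hc
      rw [Pi.single_eq_same]
      rw [show ((0:F) - 1) = -1 by ring, ← hv]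
      exact inv_mul_cancel₀ hvne
    · have h0 : ((Finset.univ.erase c₀).prod fun c' => c - c') = 0 :=
        Finset.prod_eq_zero (Finset.mem_erase.mpr ⟨hc, Finset.mem_univ c⟩) (sub_self c)
      rw [h0, mul_zero]
      simp [Pi.single_apply, hc]
  · have hev : eval (pt F (Sum.inr (Sum.inr u))) G = 0 := by
      rw [hval]
      rw [show pt F (Sum.inr (Sum.inr u)) 1 = 0 from rfl, zero_pow hs, zero_mul, zero_mul]
    rw [hev, mul_zero]
    simp [Pi.single_apply]


lemma range_eq_top_of_ge {b : ℕ} (hb : 0 < b) {d₀ : ℕ}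
    (hd₀ : Fintype.card F + (Fintype.card F - 1) / b ≤ d₀) :
    LinearMap.range (Emap F b (d₀ * b)) = ⊤ := by
  classical
  set q := Fintype.card F with hq
  have hq2 : 2 ≤ q := Fintype.one_lt_card
  set n := q - 1 with hn
  set d := d₀ * b with hd
  -- arithmetic: d = s + (n + n * b) with s ≥ 1
  obtain ⟨s, hs0, hsd⟩ : ∃ s : ℕ, s ≠ 0 ∧ d = s + (n + n * b) := by
    refine ⟨d - (n + n * b), ?_, ?_⟩
    · have h1 : n % b < b := Nat.mod_lt _ hb
      have h2 : b * (n / b) + n % b = n := Nat.div_add_mod n b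
      have h3 : (q + n / b) * b ≤ d₀ * b := Nat.mul_le_mul_right _ hd₀
      have h4 : (q + n / b) * b = q * b + (n / b) * b := add_mul _ _ _
      have h5 : q * b = n * b + b := by
        have : q = n + 1 := by omega
        rw [this, add_mul, one_mul]
      have h6 : (n / b) * b = b * (n / b) := mul_comm _ _
      have h7 : n * (b + 1) = n * b + n := by ring
      have h8 : n * b + n + 1 ≤ d := by omega
      omega
    · have h1 : n % b < b := Nat.mod_lt _ hb
      have h2 : b * (n / b) + n % b = n := Nat.div_add_mod n b
      have h3 : (q + n / b) * b ≤ d₀ * b := Nat.mul_le_mul_right _ hd₀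
      have h4 : (q + n / b) * b = q * b + (n / b) * b := add_mul _ _ _
      have h5 : q * b = n * b + b := by
        have : q = n + 1 := by omega
        rw [this, add_mul, one_mul]
      have h6 : (n / b) * b = b * (n / b) := mul_comm _ _
      omega
  have hsingle1 : ∀ a₀ c₀ : F,
      Pi.single (Sum.inl (a₀, c₀) : RT F) (1 : F) ∈ LinearMap.range (Emap F b d) :=
    fun a₀ c₀ => single_inl_mem F hs0 hsd a₀ c₀
  have hsingle2 : ∀ c₀ : F,
      Pi.single (Sum.inr (Sum.inl c₀) : RT F) (1 : F) ∈ LinearMap.range (Emap F b d) :=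
    fun c₀ => single_mid_mem F hs0 hsd c₀
  -- the top point
  have hHmem : (X 2 ^ d₀ : MvPolynomial (Fin 3) F) ∈ Sd F b d := by
    rw [Sd, mem_weightedHomogeneousSubmodule, hd]
    have := IWH_pow (F := F) (isWeightedHomogeneous_X F ![1,1,b] 2) d₀
    simpa using this
  have hsingle3 : Pi.single (Sum.inr (Sum.inr ()) : RT F) (1 : F)
      ∈ LinearMap.range (Emap F b d) := by
    set u : RT F → F := Emap F b d ⟨X 2 ^ d₀, hHmem⟩ with hu
    have humem : u ∈ LinearMap.range (Emap F b d) := ⟨_, rfl⟩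
    have hutop : u (Sum.inr (Sum.inr ())) = 1 := by
      simp [hu, Emap, pt]
    have hkey : Pi.single (Sum.inr (Sum.inr ()) : RT F) (1 : F)
        = u - ∑ r ∈ Finset.univ.erase (Sum.inr (Sum.inr ()) : RT F),
            u r • (Pi.single r (1:F) : RT F → F) := by
      funext x
      rw [Pi.sub_apply, Finset.sum_apply]
      have hsum : (∑ r ∈ Finset.univ.erase (Sum.inr (Sum.inr ()) : RT F),
          (u r • (Pi.single r (1:F) : RT F → F)) x)
          = ∑ r ∈ Finset.univ.erase (Sum.inr (Sum.inr ()) : RT F),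
            (if x = r then u r else 0) := by
        apply Finset.sum_congr rfl
        intro r _
        rw [Pi.smul_apply, Pi.single_apply]
        simp [smul_ite]
      rw [hsum, Finset.sum_ite_eq]
      by_cases hx : x = (Sum.inr (Sum.inr ()) : RT F)
      · subst hx
        simp [hutop]
      · simp [Pi.single_apply, hx, Finset.mem_erase.mpr ⟨hx, Finset.mem_univ x⟩]
    rw [hkey]
    apply Submodule.sub_mem _ humem
    apply Submodule.sum_mem
    intro r hr
    apply Submodule.smul_mem
    rcases r with ⟨a₀, c₀⟩ | c₀ | u'
    · exact hsingle1 a₀ c₀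
    · exact hsingle2 c₀
    · cases u'
      exact absurd rfl (Finset.mem_erase.mp hr).1
  -- now all singles are in range
  rw [eq_top_iff]
  intro g _
  have hg : g = ∑ r : RT F, g r • (Pi.single r (1:F) : RT F → F) := by
    funext x
    rw [Finset.sum_apply]
    have : ∀ r : RT F, (g r • (Pi.single r (1:F) : RT F → F)) x
        = if x = r then g r else 0 := by
      intro r
      rw [Pi.smul_apply, Pi.single_apply]
      simp [smul_ite]
    simp only [this]
    rw [Finset.sum_ite_eq]
    simp
  rw [hg]
  apply Submodule.sum_mem
  intro r _
  apply Submodule.smul_mem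
  rcases r with ⟨a₀, c₀⟩ | c₀ | u'
  · exact hsingle1 a₀ c₀
  · exact hsingle2 c₀
  · cases u'
    exact hsingle3


lemma sigma_pow (k : ℕ) : ∑ x : F, x ^ k
    = if k ≠ 0 ∧ (Fintype.card F - 1) ∣ k then (-1 : F) else 0 := by
  classical
  by_cases hk : k = 0
  · subst hk
    simp only [pow_zero, Finset.sum_const, Finset.card_univ, nsmul_eq_mul, mul_one]
    rw [FiniteField.cast_card_eq_zero]
    simp
  · have huniv : (Finset.univ.map ⟨fun x : Fˣ => (x : F), Units.val_injective⟩)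
        = Finset.univ \ {(0:F)} := by
      ext x
      simp only [Finset.mem_map, Finset.mem_univ, Function.Embedding.coeFn_mk, true_and,
        Finset.mem_sdiff, Finset.mem_singleton]
      constructor
      · rintro ⟨a, rfl⟩
        exact a.ne_zero
      · intro hx
        exact isUnit_iff_ne_zero.mpr hx
    have h1 : ∑ x : F, x ^ k = ∑ x ∈ Finset.univ \ {(0:F)}, x ^ k := by
      rw [← Finset.sum_sdiff (Finset.subset_univ {(0:F)}), Finset.sum_singleton,
        zero_pow hk, add_zero]
    rw [h1, ← huniv, Finset.sum_map]
    simp only [Function.Embedding.coeFn_mk]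
    have h2 := FiniteField.sum_pow_units F k
    rw [h2]
    simp [hk]

lemma eval_monomial_pt (y : Fin 3 → F) (m : Fin 3 →₀ ℕ) :
    eval y (monomial m (1:F)) = y 0 ^ m 0 * y 1 ^ m 1 * y 2 ^ m 2 := by
  rw [eval_monomial, one_mul, Finsupp.prod_pow, Fin.prod_univ_three]

lemma range_ne_top_of_relation {b d : ℕ} (lam : RT F → F) (r₀ : RT F)
    (hne : lam r₀ ≠ 0)
    (hrel : ∀ m : Fin 3 →₀ ℕ, m 0 + m 1 + m 2 * b = d →
      ∑ r : RT F, lam r * eval (pt F r) (monomial m (1:F)) = 0) :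
    ¬ (LinearMap.range (Emap F b d) = ⊤) := by
  classical
  intro htop
  have hall' : ∀ f, f ∈ Submodule.span F
      ((fun m => (monomial m (1:F) : MvPolynomial (Fin 3) F)) ''
        {m : Fin 3 →₀ ℕ | m 0 + m 1 + m 2 * b = d}) →
      ∑ r : RT F, lam r * eval (pt F r) f = 0 := by
    intro f hf
    induction hf using Submodule.span_induction with
    | mem x hx =>
        obtain ⟨m, hm, rfl⟩ := hx
        exact hrel m hm
    | zero => simp
    | add x y hx hy ihx ihy =>
        have : ∀ r : RT F, lam r * eval (pt F r) (x + y)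
            = lam r * eval (pt F r) x + lam r * eval (pt F r) y := by
          intro r; rw [map_add]; ring
        simp only [this]
        rw [Finset.sum_add_distrib, ihx, ihy, add_zero]
    | smul a x hx ih =>
        have : ∀ r : RT F, lam r * eval (pt F r) (a • x)
            = a * (lam r * eval (pt F r) x) := by
          intro r; rw [MvPolynomial.smul_eval]; ring
        simp only [this]
        rw [← Finset.mul_sum, ih, mul_zero]
  have hall : ∀ f, f ∈ Sd F b d → ∑ r : RT F, lam r * eval (pt F r) f = 0 :=
    fun f hf => hall' f (Sd_le_span F b d hf)
  obtain ⟨f, hf⟩ : (Pi.single r₀ (1:F) : RT F → F) ∈ LinearMap.range (Emap F b d) := by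
    rw [htop]; trivial
  have h1 := hall (f : MvPolynomial (Fin 3) F) f.2
  have h2 : ∀ r : RT F, eval (pt F r) (f : MvPolynomial (Fin 3) F)
      = (Pi.single r₀ (1:F) : RT F → F) r := fun r => congr_fun hf r
  simp only [h2] at h1
  rw [Finset.sum_congr rfl (fun r _ => by rw [Pi.single_apply, mul_ite, mul_one, mul_zero])]
    at h1
  rw [Finset.sum_ite_eq' Finset.univ r₀ lam] at h1
  simp at h1
  exact hne h1

lemma sum_relation (lam : RT F → F)
    (h1 : ∀ a c : F, lam (Sum.inl (a, c)) = lam (Sum.inl (a, 0)))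
    (h2 : ∀ c : F, lam (Sum.inr (Sum.inl c)) = lam (Sum.inr (Sum.inl 0)))
    (m : Fin 3 →₀ ℕ) :
    ∑ r : RT F, lam r * eval (pt F r) (monomial m (1:F))
      = (∑ a : F, lam (Sum.inl (a, 0)) * a ^ m 1) * (∑ c : F, c ^ m 2)
        + lam (Sum.inr (Sum.inl 0)) * ((0:F) ^ m 0) * (∑ c : F, c ^ m 2)
        + lam (Sum.inr (Sum.inr ())) * ((0:F) ^ m 0) * ((0:F) ^ m 1) := by
  rw [Fintype.sum_sum_type, Fintype.sum_sum_type]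
  have hA : (∑ ac : F × F, lam (Sum.inl ac) * eval (pt F (Sum.inl ac)) (monomial m (1:F)))
      = (∑ a : F, lam (Sum.inl (a, 0)) * a ^ m 1) * (∑ c : F, c ^ m 2) := by
    rw [Finset.sum_mul_sum, Fintype.sum_prod_type]
    apply Finset.sum_congr rfl
    intro a _
    apply Finset.sum_congr rfl
    intro c _
    rw [h1 a c, eval_monomial_pt, show pt F (Sum.inl (a, c)) = ![1, a, c] from rfl]
    simp only [Matrix.cons_val_zero, Matrix.cons_val_one, Matrix.head_cons,
      Matrix.cons_val_two, Matrix.tail_cons]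
    rw [one_pow]
    ring
  have hB : (∑ c : F, lam (Sum.inr (Sum.inl c)) * eval (pt F (Sum.inr (Sum.inl c)))
        (monomial m (1:F)))
      = lam (Sum.inr (Sum.inl 0)) * ((0:F) ^ m 0) * (∑ c : F, c ^ m 2) := by
    have hterm : ∀ c : F, lam (Sum.inr (Sum.inl c)) * eval (pt F (Sum.inr (Sum.inl c)))
        (monomial m (1:F))
        = lam (Sum.inr (Sum.inl 0)) * ((0:F) ^ m 0) * c ^ m 2 := by
      intro c
      rw [h2 c, eval_monomial_pt, show pt F (Sum.inr (Sum.inl c)) = ![0, 1, c] from rfl]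
      simp only [Matrix.cons_val_zero, Matrix.cons_val_one, Matrix.head_cons,
        Matrix.cons_val_two, Matrix.tail_cons]
      rw [one_pow]
      ring
    simp only [hterm]
    rw [← Finset.mul_sum]
  have hC : (∑ u : Unit, lam (Sum.inr (Sum.inr u)) * eval (pt F (Sum.inr (Sum.inr u)))
        (monomial m (1:F)))
      = lam (Sum.inr (Sum.inr ())) * ((0:F) ^ m 0) * ((0:F) ^ m 1) := by
    rw [Finset.sum_eq_single_of_mem () (Finset.mem_univ ())
      (by intro x _ hx; cases x; simp at hx)]
    rw [eval_monomial_pt, show pt F (Sum.inr (Sum.inr ())) = ![0, 0, 1] from rfl]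
    simp only [Matrix.cons_val_zero, Matrix.cons_val_one, Matrix.head_cons,
      Matrix.cons_val_two, Matrix.tail_cons]
    rw [one_pow]
    ring
  rw [hA, hB, hC]
  ring

lemma neces_N1 {b d : ℕ} (hb : 0 < b) (hnd : ¬ b ∣ d) :
    ¬ LinearMap.range (Emap F b d) = ⊤ := by
  apply range_ne_top_of_relation F
    (Sum.elim (fun _ : F × F => (0:F)) (Sum.elim (fun _ : F => 0) (fun _ : Unit => 1)))
    (Sum.inr (Sum.inr ())) (by simp)
  intro m hm
  rw [sum_relation F (Sum.elim (fun _ : F × F => (0:F))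
      (Sum.elim (fun _ : F => 0) (fun _ : Unit => 1))) (fun _ _ => rfl) (fun _ => rfl) m]
  simp only [Sum.elim_inl, Sum.elim_inr]
  rcases Nat.eq_zero_or_pos (m 0) with h0 | h0
  · rcases Nat.eq_zero_or_pos (m 1) with h1 | h1
    · exact absurd (Dvd.intro_left (m 2) (by omega)) hnd
    · rw [zero_pow (by omega : m 1 ≠ 0)]
      simp
  · rw [zero_pow (by omega : m 0 ≠ 0)]
    simp

lemma neces_N2 {b d₀ : ℕ} (hb : 0 < b) (hd₀ : d₀ ≤ Fintype.card F - 1) :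
    ¬ LinearMap.range (Emap F b (d₀ * b)) = ⊤ := by
  classical
  set n := Fintype.card F - 1 with hn
  have hn1 : 1 ≤ n := by
    have := Fintype.one_lt_card (α := F)
    omega
  apply range_ne_top_of_relation F
    (Sum.elim (fun _ : F × F => (0:F))
      (Sum.elim (fun _ : F => 1) (fun _ : Unit => if d₀ = n then 1 else 0)))
    (Sum.inr (Sum.inl 0)) (by simp)
  intro m hm
  rw [sum_relation F (Sum.elim (fun _ : F × F => (0:F))
      (Sum.elim (fun _ : F => 1) (fun _ : Unit => if d₀ = n then 1 else 0)))
      (fun _ _ => rfl) (fun _ => rfl) m]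
  simp only [Sum.elim_inl, Sum.elim_inr]
  have hzero : (∑ a : F, (0:F) * a ^ m 1) = 0 := by simp
  rw [hzero, zero_mul, zero_add]
  rcases Nat.eq_zero_or_pos (m 0) with h0 | h0
  · rw [h0, pow_zero]
    rcases Nat.eq_zero_or_pos (m 1) with h1 | h1
    · have hm2 : m 2 = d₀ := Nat.eq_of_mul_eq_mul_right hb (by omega)
      rw [h1, pow_zero, hm2, sigma_pow]
      by_cases hdn : d₀ = n
      · rw [if_pos ⟨by omega, hdn ▸ dvd_rfl⟩, if_pos hdn]
        ring
      · rw [if_neg, if_neg hdn]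
        · ring
        · rintro ⟨hne, hdvd⟩
          exact hdn (le_antisymm hd₀ (Nat.le_of_dvd (by omega) hdvd))
    · rw [zero_pow (by omega : m 1 ≠ 0), sigma_pow, if_neg]
      · ring
      · rintro ⟨hne, hdvd⟩
        have h2 : n ≤ m 2 := Nat.le_of_dvd (by omega) hdvd
        have h3 : n * b ≤ m 2 * b := Nat.mul_le_mul_right b h2
        have h4 : d₀ * b ≤ n * b := Nat.mul_le_mul_right b hd₀
        omega
  · rw [zero_pow (by omega : m 0 ≠ 0)]
    ring


lemma neces_N3 {b d₀ : ℕ} (hb : 0 < b)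
    (hlow : Fintype.card F ≤ d₀)
    (hhigh : d₀ ≤ (Fintype.card F - 1) + (Fintype.card F - 1) / b)
    (hedge : ¬ ((Fintype.card F - 1) ∣ (d₀ * b) ∧
      ((Fintype.card F - 1) / b) * b = (Fintype.card F - 1))) :
    ¬ LinearMap.range (Emap F b (d₀ * b)) = ⊤ := by
  classical
  set n := Fintype.card F - 1 with hn
  have hn1 : 1 ≤ n := by
    have := Fintype.one_lt_card (α := F)
    omega
  set d := d₀ * b with hd
  set t := n - d % n with ht
  have hrlt : d % n < n := Nat.mod_lt d (by omega)
  have ht1 : 1 ≤ t := by omega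
  have hdm := Nat.div_add_mod d n
  have htd : n ∣ t + d := by
    refine ⟨1 + d / n, ?_⟩
    have hexp : n * (1 + d / n) = n + n * (d / n) := by ring
    omega
  have hnd_iff : (n ∣ d) ↔ d % n = 0 := by
    constructor
    · intro ⟨j, hj⟩
      rcases le_or_gt j (d / n) with hjk | hjk
      · have := Nat.mul_le_mul_left n hjk
        rcases Nat.eq_zero_or_pos (d % n) with h | h
        · exact h
        · have h2 : j + 1 ≤ d / n + 1 := by omega
          rcases Nat.lt_or_ge j (d / n) with h3 | h3
          · have h4 : j + 1 ≤ d / n := h3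
            have := Nat.mul_le_mul_left n h4
            have hexp : n * (j + 1) = n * j + n := by ring
            omega
          · have : j = d / n := by omega
            subst this
            omega
      · have h2 : d / n + 1 ≤ j := hjk
        have := Nat.mul_le_mul_left n h2
        have hexp : n * (d / n + 1) = n * (d / n) + n := by ring
        omega
    · intro h
      exact ⟨d / n, by omega⟩
  -- the relation coefficients
  apply range_ne_top_of_relation F
    (Sum.elim (fun ac : F × F => ac.1 ^ t)
      (Sum.elim (fun _ : F => (1:F))
        (fun _ : Unit => if n ∣ d₀ then (1 - if n ∣ d then (1:F) else 0) else 0)))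
    (Sum.inl (1, 0)) (by simp)
  intro m hm
  rw [sum_relation F (Sum.elim (fun ac : F × F => ac.1 ^ t)
      (Sum.elim (fun _ : F => (1:F))
        (fun _ : Unit => if n ∣ d₀ then (1 - if n ∣ d then (1:F) else 0) else 0)))
      (fun _ _ => rfl) (fun _ => rfl) m]
  simp only [Sum.elim_inl, Sum.elim_inr]
  have hpow : (∑ a : F, a ^ t * a ^ m 1) = ∑ a : F, a ^ (t + m 1) := by
    apply Finset.sum_congr rfl
    intro a _
    rw [pow_add]
  rw [hpow, sigma_pow F (t + m 1), sigma_pow F (m 2)]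
  by_cases hm2 : m 2 ≠ 0 ∧ n ∣ m 2
  · rw [if_pos hm2]
    rcases Nat.eq_zero_or_pos (m 0) with h0 | h0
    · rw [h0, pow_zero]
      rcases Nat.eq_zero_or_pos (m 1) with h1 | h1
      · -- m0 = m1 = 0, m2 = d₀, n ∣ d₀
        have hm2d : m 2 = d₀ := Nat.eq_of_mul_eq_mul_right hb (by omega)
        have hnd₀ : n ∣ d₀ := hm2d ▸ hm2.2
        rw [h1, pow_zero, add_zero]
        by_cases hnd : n ∣ d
        · have htn : t = n := by
            have := hnd_iff.mp hnd
            omega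
          rw [if_pos ⟨by omega, htn ▸ dvd_rfl⟩, if_pos hnd₀, if_pos hnd]
          ring
        · rw [if_neg, if_pos hnd₀, if_neg hnd]
          · ring
          · rintro ⟨-, hcon⟩
            have hle : n ≤ t := Nat.le_of_dvd (by omega) hcon
            have htn : t = n := by omega
            exact hnd (hnd_iff.mpr (by omega))
      · -- m0 = 0, m1 > 0
        have hdvd2 : n ∣ m 2 * b := hm2.2.mul_right b
        have hdvd3 : n ∣ t + m 1 := by
          have h4 : n ∣ (t + d) - m 2 * b := Nat.dvd_sub htd hdvd2
          have h5 : (t + d) - m 2 * b = t + m 1 := by omega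
          rwa [h5] at h4
        rw [if_pos ⟨by omega, hdvd3⟩, zero_pow (by omega : m 1 ≠ 0)]
        ring
    · -- m0 > 0 : show the a-sum vanishes
      rw [zero_pow (by omega : m 0 ≠ 0)]
      rw [if_neg]
      · ring
      · rintro ⟨-, hconj⟩
        -- arithmetic contradiction
        have hm2pos : 1 ≤ m 2 := by omega
        have hm2n : n ≤ m 2 := Nat.le_of_dvd (by omega) hm2.2
        have e3 : n * b ≤ m 2 * b := Nat.mul_le_mul_right b hm2n
        have hdvd2 : n ∣ m 2 * b := hm2.2.mul_right b
        have hdm1 : n ∣ d - m 1 := by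
          have h4 : n ∣ (t + d) - (t + m 1) := Nat.dvd_sub htd hconj
          have h5 : (t + d) - (t + m 1) = d - m 1 := by omega
          rwa [h5] at h4
        have hdm0 : n ∣ m 0 := by
          have h4 : n ∣ (d - m 1) - m 2 * b := Nat.dvd_sub hdm1 hdvd2
          have h5 : (d - m 1) - m 2 * b = m 0 := by omega
          rwa [h5] at h4
        have hm0n : n ≤ m 0 := Nat.le_of_dvd (by omega) hdm0
        -- m 1 ≥ d % n
        obtain ⟨j, hj⟩ := hconj
        have hj1 : 1 ≤ j := by
          rcases Nat.eq_zero_or_pos j with h | h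
          · subst h; omega
          · exact h
        have e4 : n * 1 ≤ n * j := Nat.mul_le_mul_left n hj1
        have e8 : n * j = (Fintype.card F - 1) * j := by rw [hn]
        have hm1r : d % n ≤ m 1 := by omega
        -- d ≤ n*b + (n/b)*b
        have e5 : d₀ * b ≤ (n + n / b) * b := Nat.mul_le_mul_right b hhigh
        have e6 : (n + n / b) * b = n * b + (n / b) * b := add_mul _ _ _
        have e7 : (n / b) * b ≤ n := Nat.div_mul_le_self n b
        -- combine: d ≥ m0 + m1 + m2*b ≥ n + d%n + n*b
        have hfin1 : d % n = 0 ∧ (n / b) * b = n := by omega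
        exact hedge ⟨hnd_iff.mpr hfin1.1, hfin1.2⟩
  · rw [if_neg hm2]
    rcases Nat.eq_zero_or_pos (m 0) with h0 | h0
    · rcases Nat.eq_zero_or_pos (m 1) with h1 | h1
      · have hm2d : m 2 = d₀ := Nat.eq_of_mul_eq_mul_right hb (by omega)
        have : ¬ n ∣ d₀ := by
          intro hcon
          apply hm2
          constructor
          · omega
          · rw [hm2d]; exact hcon
        rw [if_neg this]
        ring
      · rw [h0, pow_zero, zero_pow (by omega : m 1 ≠ 0)]
        ring
    · rw [zero_pow (by omega : m 0 ≠ 0)]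
      ring


lemma neces_N4 {b d₀ : ℕ} (hb : 0 < b)
    (hd : d₀ * b = (Fintype.card F - 1) * (b + 1)) :
    ¬ LinearMap.range (Emap F b (d₀ * b)) = ⊤ := by
  classical
  set n := Fintype.card F - 1 with hn
  have hn1 : 1 ≤ n := by
    have := Fintype.one_lt_card (α := F)
    omega
  have hexp : n * (b + 1) = n * b + n := by ring
  have hd₀pos : 1 ≤ d₀ := by
    rcases Nat.eq_zero_or_pos d₀ with h | h
    · subst h; simp at hd; omega
    · exact h
  apply range_ne_top_of_relation F
    (Sum.elim (fun _ : F × F => (1:F))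
      (Sum.elim (fun _ : F => (1:F))
        (fun _ : Unit => if n ∣ d₀ then (1:F) else 0)))
    (Sum.inl (1, 0)) (by simp)
  intro m hm
  rw [sum_relation F (Sum.elim (fun _ : F × F => (1:F))
      (Sum.elim (fun _ : F => (1:F))
        (fun _ : Unit => if n ∣ d₀ then (1:F) else 0)))
      (fun _ _ => rfl) (fun _ => rfl) m]
  simp only [Sum.elim_inl, Sum.elim_inr]
  have hone : (∑ a : F, (1:F) * a ^ m 1) = ∑ a : F, a ^ m 1 := by
    apply Finset.sum_congr rfl
    intro a _
    rw [one_mul]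
  rw [hone, sigma_pow F (m 1), sigma_pow F (m 2)]
  by_cases hm2 : m 2 ≠ 0 ∧ n ∣ m 2
  · rw [if_pos hm2]
    rcases Nat.eq_zero_or_pos (m 0) with h0 | h0
    · rw [h0, pow_zero]
      rcases Nat.eq_zero_or_pos (m 1) with h1 | h1
      · have hm2d : m 2 = d₀ := Nat.eq_of_mul_eq_mul_right hb (by omega)
        have hnd₀ : n ∣ d₀ := hm2d ▸ hm2.2
        rw [h1, if_neg (by simp), if_pos hnd₀, pow_zero]
        ring
      · have hdvdd : n ∣ d₀ * b := ⟨b + 1, hd⟩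
        have hdvd2 : n ∣ m 2 * b := hm2.2.mul_right b
        have hdvd1 : n ∣ m 1 := by
          have h4 : n ∣ (d₀ * b) - m 2 * b := Nat.dvd_sub hdvdd hdvd2
          have h5 : (d₀ * b) - m 2 * b = m 1 := by omega
          rwa [h5] at h4
        rw [if_pos ⟨by omega, hdvd1⟩, zero_pow (by omega : m 1 ≠ 0)]
        ring
    · rw [zero_pow (by omega : m 0 ≠ 0), if_neg]
      · ring
      · rintro ⟨h1ne, hdvd1⟩
        have hm1n : n ≤ m 1 := Nat.le_of_dvd (by omega) hdvd1
        have hm2n : n ≤ m 2 := Nat.le_of_dvd (by omega) hm2.2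
        have e3 : n * b ≤ m 2 * b := Nat.mul_le_mul_right b hm2n
        omega
  · rw [if_neg hm2]
    rcases Nat.eq_zero_or_pos (m 0) with h0 | h0
    · rcases Nat.eq_zero_or_pos (m 1) with h1 | h1
      · have hm2d : m 2 = d₀ := Nat.eq_of_mul_eq_mul_right hb (by omega)
        have hnd₀ : ¬ n ∣ d₀ := by
          intro hcon
          exact hm2 ⟨by omega, hm2d ▸ hcon⟩
        rw [if_neg hnd₀, h0, h1]
        ring
      · rw [h0, pow_zero, zero_pow (by omega : m 1 ≠ 0)]
        ring
    · rw [zero_pow (by omega : m 0 ≠ 0)]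
      ring

end P11bAux


open P11bAux

/-- Theorem (regularity set of `Y = ℙ(1,1,b)(F_q)`): for every `d`,
`H_Y(d) = q² + q + 1` iff `d = d₀·b` for some `d₀ ≥ q + ⌊(q−1)/b⌋`, i.e.
`reg(Y) = (q + ⌊(q−1)/b⌋)b + ℕb`. -/
theorem regularity_set_P11b (q : ℕ) (hq : q = Fintype.card F) (b : ℕ) (hb : 0 < b) :
    ∀ d : ℕ, HY F b d = q ^ 2 + q + 1 ↔
      ∃ d₀ : ℕ, d = d₀ * b ∧ q + (q - 1) / b ≤ d₀ := by
  intro d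
  subst hq
  have hiff := HY_eq_top_iff F (b := b) (d := d) hb
  rw [hiff]
  have hq2 : 2 ≤ Fintype.card F := Fintype.one_lt_card
  constructor
  · intro htop
    by_contra hcon
    push_neg at hcon
    by_cases hbd : b ∣ d
    · obtain ⟨d₀, hd₀⟩ := hbd
      have hd : d = d₀ * b := by rw [hd₀, mul_comm]
      have hlt := hcon d₀ hd
      rw [hd] at htop
      set n := Fintype.card F - 1 with hn
      rcases le_or_gt d₀ n with hle | hgt
      · exact neces_N2 F hb hle htop
      · have hlow : Fintype.card F ≤ d₀ := by omega
        have hhigh : d₀ ≤ n + n / b := by omega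
        by_cases hedge : (n ∣ d₀ * b ∧ (n / b) * b = n)
        · obtain ⟨hdvd, hebn⟩ := hedge
          have h1 : n * b < d₀ * b := (Nat.mul_lt_mul_right hb).mpr (by omega : n < d₀)
          have h2 : d₀ * b ≤ (n + n / b) * b := Nat.mul_le_mul_right b hhigh
          have h3 : (n + n / b) * b = n * b + (n / b) * b := add_mul _ _ _
          obtain ⟨k, hk⟩ := hdvd
          have hkb : k = b + 1 := by
            rcases le_or_gt k b with h4 | h4
            · have := Nat.mul_le_mul_left n h4
              omega
            · rcases le_or_gt (b + 2) k with h5 | h5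
              · have := Nat.mul_le_mul_left n h5
                have hexp : n * (b + 2) = n * b + n + n := by ring
                omega
              · omega
          have hfin : d₀ * b = n * (b + 1) := by rw [hk, hkb]
          exact neces_N4 F hb hfin htop
        · exact neces_N3 F hb hlow hhigh hedge htop
    · exact neces_N1 F hb hbd htop
  · rintro ⟨d₀, rfl, hge⟩
    exact range_eq_top_of_ge F hb hge
end
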